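/- Let m ∈ ℕ_{>0} and let G be a finite tree (a connected acyclic simple graph) whose diameter is at most 2m − 2. Then ffn(G) ≤ m. -/

import Mathlib

open scoped Classical
noncomputable section

variable {V : Type*}

/-- The neighbourhood of a set of vertices: all vertices outside `S` adjacent to some
vertex of `S`. -/
def nbhd [Fintype V] (G : SimpleGraph V) (S : Finset V) : Finset V :=
  Finset.univ.filter fun v => v ∉ S ∧ ∃ u ∈ S, G.Adj u v

/-- The burning sets of a strategy `F` (where `F i` is the firefighter set at time `i`):
`B 0 = V` and `B (t+1) = (B t \ F (t+1)) ∪ N(B t \ F (t+1))`. -/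
def burn [Fintype V] (G : SimpleGraph V) (F : ℕ → Finset V) : ℕ → Finset V
  | 0 => Finset.univ
  | t + 1 => (burn G F t \ F (t + 1)) ∪ nbhd G (burn G F t \ F (t + 1))

/-- `F` is a `T`-winning `m`-strategy for `G`. -/
def WinningStrategy [Fintype V] (G : SimpleGraph V) (m T : ℕ) (F : ℕ → Finset V) : Prop :=
  (∀ i, (F i).card ≤ m) ∧ burn G F T = ∅

/-- The firefighter number of `G`: the least `m` admitting a winning `m`-strategy. -/
def ffn [Fintype V] (G : SimpleGraph V) : ℕ :=
  sInf {m | ∃ T F, WinningStrategy G m T F}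


lemma burn_succ [Fintype V] (G : SimpleGraph V) (F : ℕ → Finset V) (t : ℕ) :
    burn G F (t + 1) = (burn G F t \ F (t + 1)) ∪ nbhd G (burn G F t \ F (t + 1)) := by
  rw [burn]

namespace FFT

open SimpleGraph


open SimpleGraph

/-- In a tree, every path between two vertices has length equal to the distance. -/
lemma path_length_eq_dist {G : SimpleGraph V} (ht : G.IsTree) {x y : V}
    (p : G.Walk x y) (hp : p.IsPath) : p.length = G.dist x y := by
  obtain ⟨w, hw⟩ := ht.isConnected.exists_walk_length_eq_dist x y
  have hb : w.bypass.IsPath := SimpleGraph.Walk.bypass_isPath w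
  have : (⟨p, hp⟩ : G.Path x y) = ⟨w.bypass, hb⟩ := ht.IsAcyclic.path_unique _ _
  have hpe : p = w.bypass := congrArg Subtype.val this
  have h1 : p.length ≤ G.dist x y := by
    rw [hpe, ← hw]; exact SimpleGraph.Walk.length_bypass_le w
  exact le_antisymm h1 (SimpleGraph.dist_le p)

lemma exists_parent {G : SimpleGraph V} (ht : G.IsTree) (c : V) {v : V} (hv : v ≠ c) :
    ∃ x, G.Adj v x ∧ G.dist c x + 1 = G.dist c v := by
  obtain ⟨w, hw⟩ := ht.isConnected.exists_walk_length_eq_dist v c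
  cases w with
  | nil => exact absurd rfl hv
  | cons h q =>
    rename_i x
    refine ⟨x, h, ?_⟩
    have h1 : G.dist c x ≤ q.length := by
      rw [SimpleGraph.dist_comm]; exact SimpleGraph.dist_le q
    have h2 : G.dist c v ≤ G.dist c x + 1 := by
      have := ht.isConnected.dist_triangle (u := c) (v := x) (w := v)
      have hxv : G.dist x v ≤ 1 := by
        simpa using SimpleGraph.dist_le (SimpleGraph.Walk.cons h.symm SimpleGraph.Walk.nil)
      omega
    have h3 : q.length + 1 = G.dist c v := by
      rw [SimpleGraph.dist_comm (u := c) (v := v)]; simpa using hw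
    omega

/-- parent function of the tree rooted at `c`. -/
def ppar (G : SimpleGraph V) (c : V) (v : V) : V :=
  if h : ∃ x, G.Adj v x ∧ G.dist c x + 1 = G.dist c v then h.choose else c

lemma ppar_spec {G : SimpleGraph V} (ht : G.IsTree) (c : V) {v : V} (hv : v ≠ c) :
    G.Adj v (ppar G c v) ∧ G.dist c (ppar G c v) + 1 = G.dist c v := by
  have h := exists_parent ht c hv
  rw [ppar, dif_pos h]
  exact h.choose_spec

lemma dist_eq_zero_iff {G : SimpleGraph V} (ht : G.IsTree) {c v : V} :
    G.dist c v = 0 ↔ v = c :=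
  ⟨fun h => ((ht.isConnected.dist_eq_zero_iff).mp h).symm, fun h => by simp [h]⟩

lemma iter_spec {G : SimpleGraph V} (ht : G.IsTree) (c : V) :
    ∀ (k : ℕ) (v : V), k ≤ G.dist c v →
      G.dist c ((ppar G c)^[k] v) + k = G.dist c v := by
  intro k
  induction k with
  | zero => simp
  | succ k ih =>
    intro v hk
    have h1 := ih v (by omega)
    have hne : (ppar G c)^[k] v ≠ c := by
      intro h
      rw [h] at h1
      simp [SimpleGraph.dist_self] at h1
      omega
    have h2 := (ppar_spec ht c hne).2
    rw [Function.iterate_succ_apply']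
    omega

lemma iter_root {G : SimpleGraph V} (ht : G.IsTree) (c : V) (v : V) :
    (ppar G c)^[G.dist c v] v = c := by
  have := iter_spec ht c (G.dist c v) v le_rfl
  exact (dist_eq_zero_iff ht).mp (by omega)

/-- the set of ancestors of `v` (inclusive) in the tree rooted at `c`. -/
def ancF (G : SimpleGraph V) (c : V) (v : V) : Finset V :=
  (Finset.range (G.dist c v + 1)).image (fun k => (ppar G c)^[k] v)

lemma mem_ancF {G : SimpleGraph V} {c v x : V} :
    x ∈ ancF G c v ↔ ∃ k, k ≤ G.dist c v ∧ (ppar G c)^[k] v = x := by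
  simp [ancF, Nat.lt_succ_iff]

lemma self_mem_ancF {G : SimpleGraph V} {c : V} (v : V) : v ∈ ancF G c v :=
  mem_ancF.mpr ⟨0, Nat.zero_le _, rfl⟩

lemma root_mem_ancF {G : SimpleGraph V} (ht : G.IsTree) {c : V} (v : V) : c ∈ ancF G c v :=
  mem_ancF.mpr ⟨G.dist c v, le_rfl, iter_root ht c v⟩

lemma card_ancF {G : SimpleGraph V} {c v : V} : (ancF G c v).card ≤ G.dist c v + 1 := by
  classical
  exact le_trans (Finset.card_image_le) (by simp)

lemma ancF_depth {G : SimpleGraph V} (ht : G.IsTree) {c v x : V} (hx : x ∈ ancF G c v) :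
    G.dist c x ≤ G.dist c v := by
  obtain ⟨k, hk, rfl⟩ := mem_ancF.mp hx
  have := iter_spec ht c k v hk
  omega

lemma ancF_unique_depth {G : SimpleGraph V} (ht : G.IsTree) {c v x y : V}
    (hx : x ∈ ancF G c v) (hy : y ∈ ancF G c v) (h : G.dist c x = G.dist c y) : x = y := by
  obtain ⟨k, hk, rfl⟩ := mem_ancF.mp hx
  obtain ⟨l, hl, rfl⟩ := mem_ancF.mp hy
  have h1 := iter_spec ht c k v hk
  have h2 := iter_spec ht c l v hl
  have : k = l := by omega
  rw [this]

lemma ancF_trans {G : SimpleGraph V} (ht : G.IsTree) {c v x : V} (hx : x ∈ ancF G c v) :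
    ancF G c x ⊆ ancF G c v := by
  obtain ⟨k, hk, rfl⟩ := mem_ancF.mp hx
  intro z hz
  obtain ⟨j, hj, rfl⟩ := mem_ancF.mp hz
  have hd := iter_spec ht c k v hk
  refine mem_ancF.mpr ⟨j + k, by omega, ?_⟩
  rw [Function.iterate_add_apply]

lemma ancF_comparable {G : SimpleGraph V} (ht : G.IsTree) {c v x y : V}
    (hx : x ∈ ancF G c v) (hy : y ∈ ancF G c v) (h : G.dist c x ≤ G.dist c y) :
    x ∈ ancF G c y := by
  obtain ⟨k, hk, rfl⟩ := mem_ancF.mp hx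
  obtain ⟨l, hl, rfl⟩ := mem_ancF.mp hy
  have h1 := iter_spec ht c k v hk
  have h2 := iter_spec ht c l v hl
  have hlk : l ≤ k := by omega
  refine mem_ancF.mpr ⟨k - l, by omega, ?_⟩
  rw [← Function.iterate_add_apply]
  congr 1
  omega


lemma ppar_self (G : SimpleGraph V) (c : V) : ppar G c c = c := by
  rw [ppar, dif_neg]
  rintro ⟨x, -, hx⟩
  rw [SimpleGraph.dist_self] at hx
  omega
/-- vertices on a shortest walk from the root have smaller distance. -/
lemma support_dist {G : SimpleGraph V} (ht : G.IsTree) {c x y : V}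
    (w : G.Walk c x) (hw : w.length = G.dist c x) (hy : y ∈ w.support) :
    G.dist c y ≤ G.dist c x ∧ (G.dist c y = G.dist c x → y = x) := by
  have hsplit := w.take_spec hy
  have hlen : (w.takeUntil y hy).length + (w.dropUntil y hy).length = G.dist c x := by
    conv_rhs => rw [← hw, ← hsplit]
    rw [SimpleGraph.Walk.length_append]
  have h1 : G.dist c y ≤ (w.takeUntil y hy).length := SimpleGraph.dist_le _
  have h2 : G.dist y x ≤ (w.dropUntil y hy).length := SimpleGraph.dist_le _
  constructor
  · omega
  · intro he
    have : G.dist y x = 0 := by omega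
    exact (ht.isConnected.dist_eq_zero_iff).mp this

lemma concat_path {G : SimpleGraph V} {x y c : V} {p : G.Walk c x} (hp : p.IsPath)
    (h : G.Adj x y) (hy : y ∉ p.support) : (p.concat h).IsPath := by
  rw [SimpleGraph.Walk.isPath_def, SimpleGraph.Walk.support_concat]
  exact List.Nodup.append hp.support_nodup (List.nodup_singleton y)
    (by simpa [List.disjoint_singleton] using hy)

lemma parent_unique {G : SimpleGraph V} (ht : G.IsTree) {c x v : V}
    (hadj : G.Adj x v) (hd : G.dist c x + 1 = G.dist c v) : x = ppar G c v := by
  have hvc : v ≠ c := by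
    intro h; subst h; simp [SimpleGraph.dist_self] at hd
  obtain ⟨hadj', hd'⟩ := ppar_spec ht c hvc
  set x' := ppar G c v with hx'
  obtain ⟨p, hp, hplen⟩ := ht.isConnected.exists_path_of_dist c x
  obtain ⟨p', hp', hplen'⟩ := ht.isConnected.exists_path_of_dist c x'
  have hy : v ∉ p.support := fun hmem => by
    have := support_dist ht p hplen hmem
    omega
  have hy' : v ∉ p'.support := fun hmem => by
    have := support_dist ht p' hplen' hmem
    omega
  have q1 : (p.concat hadj).IsPath := concat_path hp hadj hy
  have q2 : (p'.concat hadj'.symm).IsPath := concat_path hp' hadj'.symm hy'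
  have heq : (⟨p.concat hadj, q1⟩ : G.Path c v) = ⟨p'.concat hadj'.symm, q2⟩ :=
    ht.IsAcyclic.path_unique _ _
  have heqw : p.concat hadj = p'.concat hadj'.symm := congrArg Subtype.val heq
  have := congrArg SimpleGraph.Walk.reverse heqw
  rw [SimpleGraph.Walk.reverse_concat, SimpleGraph.Walk.reverse_concat] at this
  injection this

lemma adj_depth {G : SimpleGraph V} (ht : G.IsTree) {c x y : V} (hadj : G.Adj x y) :
    G.dist c x + 1 = G.dist c y ∨ G.dist c y + 1 = G.dist c x := by
  have hxy : x ≠ y := hadj.ne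
  have h1 : G.dist c y ≤ G.dist c x + 1 := by
    have ht1 := ht.isConnected.dist_triangle (u := c) (v := x) (w := y)
    have : G.dist x y ≤ 1 := by
      simpa using SimpleGraph.dist_le (SimpleGraph.Walk.cons hadj SimpleGraph.Walk.nil)
    omega
  have h2 : G.dist c x ≤ G.dist c y + 1 := by
    have ht1 := ht.isConnected.dist_triangle (u := c) (v := y) (w := x)
    have : G.dist y x ≤ 1 := by
      simpa using SimpleGraph.dist_le (SimpleGraph.Walk.cons hadj.symm SimpleGraph.Walk.nil)
    omega
  have hne : G.dist c x ≠ G.dist c y := by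
    intro he
    obtain ⟨p, hp, hplen⟩ := ht.isConnected.exists_path_of_dist c x
    have hy : y ∉ p.support := fun hmem => by
      have := support_dist ht p hplen hmem
      exact hxy ((this.2 (by omega)).symm) -- y = x contradiction
    have q1 : (p.concat hadj).IsPath := concat_path hp hadj hy
    have := path_length_eq_dist ht _ q1
    rw [SimpleGraph.Walk.length_concat, hplen] at this
    omega
  omega

lemma edge_fact {G : SimpleGraph V} (ht : G.IsTree) {c x y : V} (hadj : G.Adj x y) :
    x = ppar G c y ∨ y = ppar G c x := by
  rcases adj_depth ht (c := c) hadj with h | h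
  · exact Or.inl (parent_unique ht hadj h)
  · exact Or.inr (parent_unique ht hadj.symm h)

lemma exists_upwalk {G : SimpleGraph V} (ht : G.IsTree) (c : V) :
    ∀ (k : ℕ) (v x : V), k ≤ G.dist c v → (ppar G c)^[k] v = x →
      ∃ w : G.Walk v x, w.IsPath ∧ w.length = k ∧
        ∀ z ∈ w.support, ∃ j, j ≤ k ∧ (ppar G c)^[j] v = z := by
  intro k
  induction k with
  | zero =>
    intro v x _ hx
    simp only [Function.iterate_zero_apply] at hx
    subst hx
    exact ⟨SimpleGraph.Walk.nil, SimpleGraph.Walk.IsPath.nil, rfl, by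
      intro z hz
      simp only [SimpleGraph.Walk.support_nil, List.mem_singleton] at hz
      exact ⟨0, Nat.zero_le _, hz.symm⟩⟩
  | succ k ih =>
    intro v x hk hx
    obtain ⟨w, hw, hwl, hws⟩ := ih v ((ppar G c)^[k] v) (by omega) rfl
    have hdk := iter_spec ht c k v (by omega)
    have hne : (ppar G c)^[k] v ≠ c := by
      intro h
      rw [h] at hdk
      have := (dist_eq_zero_iff ht (c := c) (v := c)).mpr rfl
      omega
    obtain ⟨hadj, hd⟩ := ppar_spec ht c hne
    have hx' : ppar G c ((ppar G c)^[k] v) = x := by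
      rw [← hx, Function.iterate_succ_apply']
    have hnotmem : ppar G c ((ppar G c)^[k] v) ∉ w.support := by
      intro hmem
      obtain ⟨j, hj, hjz⟩ := hws _ hmem
      have h1 := iter_spec ht c j v (by omega)
      rw [hjz] at h1
      omega
    refine ⟨(w.concat hadj).copy rfl hx', ?_, ?_, ?_⟩
    · rw [SimpleGraph.Walk.isPath_copy]
      exact concat_path hw hadj hnotmem
    · simp [SimpleGraph.Walk.length_concat, hwl]
    · intro z hz
      rw [SimpleGraph.Walk.support_copy, SimpleGraph.Walk.support_concat,
        List.mem_append] at hz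
      rcases hz with hz | hz
      · obtain ⟨j, hj, hjz⟩ := hws _ hz
        exact ⟨j, by omega, hjz⟩
      · rw [List.mem_singleton] at hz
        refine ⟨k + 1, le_rfl, ?_⟩
        rw [Function.iterate_succ_apply', ← hz]
      
lemma meet_spec {G : SimpleGraph V} (ht : G.IsTree) (c : V) (v y : V) :
    ∃ p, p ∈ ancF G c v ∧ p ∈ ancF G c y ∧
      (∀ z, z ∈ ancF G c v → z ∈ ancF G c y → G.dist c z ≤ G.dist c p) ∧
      G.dist v y + G.dist c p + G.dist c p = G.dist c v + G.dist c y := by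
  classical
  have hne : ((ancF G c v) ∩ (ancF G c y)).Nonempty :=
    ⟨c, Finset.mem_inter.mpr ⟨root_mem_ancF ht v, root_mem_ancF ht y⟩⟩
  obtain ⟨p, hp, hmax⟩ := Finset.exists_max_image _ (fun z => G.dist c z) hne
  rw [Finset.mem_inter] at hp
  obtain ⟨hpv, hpy⟩ := hp
  refine ⟨p, hpv, hpy, ?_, ?_⟩
  · intro z hzv hzy
    exact hmax z (Finset.mem_inter.mpr ⟨hzv, hzy⟩)
  · obtain ⟨k1, hk1, hk1e⟩ := mem_ancF.mp hpv
    obtain ⟨k2, hk2, hk2e⟩ := mem_ancF.mp hpy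
    have hd1 := iter_spec ht c k1 v hk1
    have hd2 := iter_spec ht c k2 y hk2
    rw [hk1e] at hd1
    rw [hk2e] at hd2
    obtain ⟨w1, hw1p, hw1l, hw1s⟩ := exists_upwalk ht c k1 v p hk1 hk1e
    obtain ⟨w2, hw2p, hw2l, hw2s⟩ := exists_upwalk ht c k2 y p hk2 hk2e
    set W : G.Walk v y := w1.append w2.reverse with hW
    have hWp : W.IsPath := by
      rw [SimpleGraph.Walk.isPath_def, hW, SimpleGraph.Walk.support_append]
      refine List.Nodup.append hw1p.support_nodup ?_ ?_
      · exact (hw2p.reverse.support_nodup).tail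
      · -- disjointness
        intro z hz1 hz2
        have hz2' : z ∈ w2.reverse.support := List.tail_subset _ hz2
        rw [SimpleGraph.Walk.support_reverse, List.mem_reverse] at hz2'
        -- z is a common ancestor of v and y of depth ≥ dist c p, hence = p
        obtain ⟨j1, hj1, hj1e⟩ := hw1s z hz1
        obtain ⟨j2, hj2, hj2e⟩ := hw2s z hz2'
        have hzv : z ∈ ancF G c v := mem_ancF.mpr ⟨j1, by omega, hj1e⟩
        have hzy : z ∈ ancF G c y := mem_ancF.mpr ⟨j2, by omega, hj2e⟩
        have hle : G.dist c z ≤ G.dist c p := hmax z (Finset.mem_inter.mpr ⟨hzv, hzy⟩)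
        have hge : G.dist c p ≤ G.dist c z := by
          have := iter_spec ht c j1 v (by omega)
          rw [hj1e] at this
          omega
        have hzp : z = p := ancF_unique_depth ht hzv hpv (by omega)
        -- but p is the head of w2.reverse.support, not in its tail
        have hd : w2.reverse.support = p :: w2.reverse.support.tail :=
          SimpleGraph.Walk.support_eq_cons _
        have hnd := hw2p.reverse.support_nodup
        rw [hd] at hnd
        rw [hzp] at hz2
        exact (List.nodup_cons.mp hnd).1 hz2
    have := path_length_eq_dist ht W hWp
    rw [hW, SimpleGraph.Walk.length_append, SimpleGraph.Walk.length_reverse, hw1l, hw2l] at this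
    omega

lemma exists_center [Fintype V] [Nonempty V] {G : SimpleGraph V} (ht : G.IsTree) {m : ℕ}
    (hm : 0 < m) (hdiam : ∀ u v : V, G.dist u v ≤ 2 * m - 2) :
    ∃ c : V, ∀ v : V, G.dist c v ≤ m - 1 := by
  classical
  obtain ⟨uw, -, hmax⟩ := Finset.exists_max_image (Finset.univ : Finset (V × V))
    (fun q => G.dist q.1 q.2) ⟨(Classical.arbitrary V, Classical.arbitrary V), Finset.mem_univ _⟩
  obtain ⟨u, w⟩ := uw
  set D := G.dist u w with hD
  have hmax' : ∀ x y : V, G.dist x y ≤ D := fun x y => hmax (x, y) (Finset.mem_univ _)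
  -- root everything at u
  have hdw : G.dist u w = D := rfl
  set c := (ppar G u)^[D / 2] w with hc
  have hcmem : c ∈ ancF G u w := mem_ancF.mpr ⟨D / 2, by omega, rfl⟩
  have hdc : G.dist u c + D / 2 = D := by
    have := iter_spec ht u (D / 2) w (by omega)
    rw [← hc] at this
    omega
  refine ⟨c, fun v => ?_⟩
  rw [SimpleGraph.dist_comm]
  obtain ⟨p, hpv, hpc, hpmax, hpd⟩ := meet_spec ht u v c
  obtain ⟨q, hqv, hqw, hqmax, hqd⟩ := meet_spec ht u v w
  have hDm : D ≤ 2 * m - 2 := hdiam u w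
  have hdvD : G.dist u v ≤ D := hmax' u v
  have hdvw : G.dist v w ≤ D := hmax' v w
  by_cases hcase : G.dist u c ≤ G.dist u q
  · -- c is an ancestor of q, hence of v; so p = c
    have hcq : c ∈ ancF G u q := ancF_comparable ht hcmem hqw hcase
    have hcv : c ∈ ancF G u v := ancF_trans ht hqv hcq
    have h1 : G.dist u c ≤ G.dist u p := hpmax c hcv (self_mem_ancF c)
    have h2 : G.dist u p ≤ G.dist u c := ancF_depth ht hpc
    have hpeq : p = c := ancF_unique_depth ht hpc (self_mem_ancF c) (by omega)
    rw [hpeq] at hpd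
    omega
  · push_neg at hcase
    have hqc : q ∈ ancF G u c := ancF_comparable ht hqw hcmem (by omega)
    have h1 : G.dist u q ≤ G.dist u p := hpmax q hqv hqc
    have h2 : G.dist u p ≤ G.dist u q := by
      refine hqmax p hpv (ancF_trans ht hcmem hpc)
    omega

/-! ### lists -/

lemma lexF1 : ∀ (l : List ℕ) {a b : ℕ} (s t : List ℕ), a < b →
    List.Lex (· < ·) (l ++ a :: s) (l ++ b :: t) := by
  intro l
  induction l with
  | nil => intro a b s t h; exact List.Lex.rel h
  | cons x l ih => intro a b s t h; exact List.Lex.cons (ih s t h)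

lemma lexF3 : ∀ (l : List ℕ) {a b : ℕ} {s t : List ℕ},
    List.Lex (· < ·) (l ++ a :: s) (l ++ b :: t) → a ≠ b → a < b := by
  intro l
  induction l with
  | nil =>
    intro a b s t h hne
    cases h with
    | rel h => exact h
    | cons h => exact absurd rfl hne
  | cons x l ih =>
    intro a b s t h hne
    cases h with
    | rel h => exact absurd h (lt_irrefl x)
    | cons h => exact ih h hne

lemma list_split : ∀ (A B : List ℕ), A <+: B ∨ B <+: A ∨
    ∃ (l : List ℕ) (a b : ℕ) (s t : List ℕ), a ≠ b ∧ A = l ++ a :: s ∧ B = l ++ b :: t := by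
  intro A
  induction A with
  | nil => intro B; exact Or.inl (List.nil_prefix)
  | cons a A ih =>
    intro B
    cases B with
    | nil => exact Or.inr (Or.inl (List.nil_prefix))
    | cons b B =>
      by_cases hab : a = b
      · subst hab
        rcases ih B with h | h | ⟨l, x, y, s, t, hxy, hA, hB⟩
        · exact Or.inl (List.cons_prefix_cons.mpr ⟨rfl, h⟩)
        · exact Or.inr (Or.inl (List.cons_prefix_cons.mpr ⟨rfl, h⟩))
        · exact Or.inr (Or.inr ⟨a :: l, x, y, s, t, hxy, by simp [hA], by simp [hB]⟩)
      · exact Or.inr (Or.inr ⟨[], a, b, A, B, hab, rfl, rfl⟩)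

lemma prefix_concat_of_le {l l' : List ℕ} {a : ℕ} (h : l <+: l' ++ [a])
    (hl : l.length ≤ l'.length) : l <+: l' := by
  obtain ⟨t, ht⟩ := h
  rcases List.eq_nil_or_concat t with rfl | ⟨t', a', rfl⟩
  · exfalso
    have := congrArg List.length ht
    simp at this
    omega
  · rw [List.concat_eq_append, ← List.append_assoc] at ht
    have := List.append_inj' ht (by simp)
    exact ⟨t', this.1⟩

/-! ### chains -/

def chainA (G : SimpleGraph V) (c : V) (σ : V → ℕ) : ℕ → V → List ℕ
  | 0, v => [σ v]
  | (k+1), v => chainA G c σ k (ppar G c v) ++ [σ v]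

def chain (G : SimpleGraph V) (c : V) (σ : V → ℕ) (v : V) : List ℕ :=
  chainA G c σ (G.dist c v) v

lemma chain_root {G : SimpleGraph V} {c : V} {σ : V → ℕ} : chain G c σ c = [σ c] := by
  rw [chain, SimpleGraph.dist_self, chainA]

lemma chain_step {G : SimpleGraph V} (ht : G.IsTree) {c : V} {σ : V → ℕ} {v : V} (hv : v ≠ c) :
    chain G c σ v = chain G c σ (ppar G c v) ++ [σ v] := by
  have hd := (ppar_spec ht c hv).2
  rw [chain, chain, ← hd, chainA]

lemma chain_length {G : SimpleGraph V} (ht : G.IsTree) {c : V} {σ : V → ℕ} :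
    ∀ (k : ℕ) (v : V), G.dist c v = k → (chain G c σ v).length = k + 1 := by
  intro k
  induction k with
  | zero =>
    intro v hv
    rw [(dist_eq_zero_iff ht).mp hv, chain_root]
    rfl
  | succ k ih =>
    intro v hv
    have hvc : v ≠ c := by
      intro h; rw [h, SimpleGraph.dist_self] at hv; omega
    have hd := (ppar_spec ht c hvc).2
    rw [chain_step ht hvc, List.length_append, ih (ppar G c v) (by omega)]
    simp

lemma chain_entries {G : SimpleGraph V} (ht : G.IsTree) {c : V} {σ : V → ℕ} :
    ∀ (k : ℕ) (v : V), G.dist c v = k → ∀ x ∈ chain G c σ v, ∃ z, σ z = x := by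
  intro k
  induction k with
  | zero =>
    intro v hv x hx
    rw [(dist_eq_zero_iff ht).mp hv, chain_root] at hx
    simp at hx
    exact ⟨c, hx.symm⟩
  | succ k ih =>
    intro v hv x hx
    have hvc : v ≠ c := by
      intro h; rw [h, SimpleGraph.dist_self] at hv; omega
    have hd := (ppar_spec ht c hvc).2
    rw [chain_step ht hvc, List.mem_append] at hx
    rcases hx with hx | hx
    · exact ih (ppar G c v) (by omega) x hx
    · simp at hx
      exact ⟨v, hx.symm⟩

lemma chain_concat_self {G : SimpleGraph V} {c : V} {σ : V → ℕ} (v : V) :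
    ∃ l, chain G c σ v = l ++ [σ v] := by
  rw [chain]
  cases h : G.dist c v with
  | zero => exact ⟨[], rfl⟩
  | succ k => exact ⟨chainA G c σ k (ppar G c v), rfl⟩

lemma chain_inj {G : SimpleGraph V} {c : V} {σ : V → ℕ} (hσ : Function.Injective σ)
    {u v : V} (h : chain G c σ u = chain G c σ v) : u = v := by
  obtain ⟨l, hl⟩ := chain_concat_self (G := G) (c := c) (σ := σ) u
  obtain ⟨l', hl'⟩ := chain_concat_self (G := G) (c := c) (σ := σ) v
  rw [hl, hl'] at h
  have := List.append_inj' h (by simp)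
  have h2 : σ u = σ v := by simpa using this.2
  exact hσ h2

lemma prefix_of_anc {G : SimpleGraph V} (ht : G.IsTree) {c : V} {σ : V → ℕ} :
    ∀ (k : ℕ) (v : V), k ≤ G.dist c v →
      chain G c σ ((ppar G c)^[k] v) <+: chain G c σ v := by
  intro k
  induction k with
  | zero => intro v _; exact List.prefix_refl _
  | succ k ih =>
    intro v hk
    have hvc : v ≠ c := by
      intro h
      rw [h] at hk
      rw [SimpleGraph.dist_self] at hk
      omega
    have hd := (ppar_spec ht c hvc).2
    rw [Function.iterate_succ_apply]
    refine (ih (ppar G c v) (by omega)).trans ?_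
    rw [chain_step ht hvc]
    exact List.prefix_append _ _

lemma prefix_of_mem_anc {G : SimpleGraph V} (ht : G.IsTree) {c : V} {σ : V → ℕ} {v x : V}
    (hx : x ∈ ancF G c v) : chain G c σ x <+: chain G c σ v := by
  obtain ⟨k, hk, rfl⟩ := mem_ancF.mp hx
  exact prefix_of_anc ht k v hk

lemma ppar_mem_anc {G : SimpleGraph V} (ht : G.IsTree) {c v : V} (hv : v ≠ c) :
    ppar G c v ∈ ancF G c v := by
  have hd := (ppar_spec ht c hv).2
  exact mem_ancF.mpr ⟨1, by omega, by simp⟩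

lemma anc_of_prefix {G : SimpleGraph V} (ht : G.IsTree) {c : V} {σ : V → ℕ}
    (hσ : Function.Injective σ) :
    ∀ (k : ℕ) (v x : V), G.dist c v = k → chain G c σ x <+: chain G c σ v →
      x ∈ ancF G c v := by
  intro k
  induction k with
  | zero =>
    intro v x hv hpre
    have hlx := chain_length (σ := σ) ht (G.dist c x) x rfl
    have hlv := chain_length (σ := σ) ht (G.dist c v) v rfl
    have hle := hpre.length_le
    have : (chain G c σ x).length = (chain G c σ v).length := by omega
    have heq := hpre.eq_of_length this
    rw [chain_inj hσ heq]
    exact self_mem_ancF v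
  | succ k ih =>
    intro v x hv hpre
    by_cases hlen : (chain G c σ x).length = (chain G c σ v).length
    · rw [chain_inj hσ (hpre.eq_of_length hlen)]
      exact self_mem_ancF v
    · have hvc : v ≠ c := by
        intro h; rw [h, SimpleGraph.dist_self] at hv; omega
      have hd := (ppar_spec ht c hvc).2
      have hlx := chain_length (σ := σ) ht (G.dist c x) x rfl
      have hlv := chain_length (σ := σ) ht (G.dist c v) v rfl
      have hlp := chain_length (σ := σ) ht (G.dist c (ppar G c v)) (ppar G c v) rfl
      have hle := hpre.length_le
      have hxp : chain G c σ x <+: chain G c σ (ppar G c v) ++ [σ v] := by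
        rw [← chain_step ht hvc]; exact hpre
      have hpre' : chain G c σ x <+: chain G c σ (ppar G c v) :=
        prefix_concat_of_le hxp (by omega)
      have := ih (ppar G c v) x (by omega) hpre'
      exact ancF_trans ht (ppar_mem_anc ht hvc) this

/-! ### keys -/

def key (G : SimpleGraph V) (c : V) (σ : V → ℕ) (N : ℕ) (v : V) : List ℕ :=
  chain G c σ v ++ [N]

lemma key_inj {G : SimpleGraph V} {c : V} {σ : V → ℕ} {N : ℕ}
    (hσ : Function.Injective σ) : Function.Injective (key G c σ N) := by
  intro u v h
  have h2 : chain G c σ u = chain G c σ v := (List.append_inj' h rfl).1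
  exact chain_inj hσ h2

lemma lex_anc {G : SimpleGraph V} (ht : G.IsTree) {c : V} {σ : V → ℕ} {N : ℕ}
    (hσ : Function.Injective σ) (hN : ∀ z, σ z < N) {v x : V}
    (hx : x ∈ ancF G c v) (hne : x ≠ v) :
    List.Lex (· < ·) (key G c σ N v) (key G c σ N x) := by
  obtain ⟨t, htp⟩ := prefix_of_mem_anc (σ := σ) ht hx
  rcases t with _ | ⟨e, t'⟩
  · rw [List.append_nil] at htp
    exact absurd (chain_inj hσ htp) hne
  · have he : ∃ z, σ z = e := by
      refine chain_entries ht (G.dist c v) v rfl e ?_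
      rw [← htp]
      simp
    obtain ⟨z, hz⟩ := he
    have heN : e < N := hz ▸ hN z
    rw [key, key, ← htp]
    have h1 : chain G c σ x ++ e :: t' ++ [N] = chain G c σ x ++ e :: (t' ++ [N]) := by simp
    have h2 : chain G c σ x ++ [N] = chain G c σ x ++ N :: [] := rfl
    rw [h1, h2]
    exact lexF1 _ _ _ heN

lemma lex_ppar {G : SimpleGraph V} (ht : G.IsTree) {c : V} {σ : V → ℕ} {N : ℕ}
    (hσ : Function.Injective σ) (hN : ∀ z, σ z < N) {v : V} (hv : v ≠ c) :
    List.Lex (· < ·) (key G c σ N v) (key G c σ N (ppar G c v)) := by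
  refine lex_anc ht hσ hN (ppar_mem_anc ht hv) ?_
  have hd := (ppar_spec ht c hv).2
  intro h
  rw [h] at hd
  omega

lemma key_main {G : SimpleGraph V} (ht : G.IsTree) {c : V} {σ : V → ℕ} {N : ℕ}
    (hσ : Function.Injective σ) (hN : ∀ z, σ z < N) {z w : V} (hz : z ≠ c)
    (hzw : z = w ∨ List.Lex (· < ·) (key G c σ N z) (key G c σ N w)) :
    ppar G c z ∈ ancF G c w ∨ ppar G c z = w ∨
      List.Lex (· < ·) (key G c σ N (ppar G c z)) (key G c σ N w) := by
  set p := ppar G c z with hp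
  rcases list_split (chain G c σ p) (chain G c σ w) with h | h | ⟨l, a, b, s, t, hab, hA, hB⟩
  · exact Or.inl (anc_of_prefix ht hσ (G.dist c w) w p rfl h)
  · by_cases hpw : p = w
    · exact Or.inr (Or.inl hpw)
    · refine Or.inr (Or.inr ?_)
      exact lex_anc ht hσ hN (anc_of_prefix ht hσ (G.dist c p) p w rfl h) (fun h2 => hpw h2.symm)
  · have hchz : chain G c σ z = l ++ a :: (s ++ [σ z]) := by
      rw [chain_step ht hz, ← hp, hA]
      simp
    rcases hzw with heq | hlex
    · -- chain z = chain w forces a = b, contradiction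
      exfalso
      have hcc : chain G c σ z = chain G c σ w := by rw [heq]
      rw [hchz, hB] at hcc
      have h2 := List.append_cancel_left hcc
      exact hab (List.head_eq_of_cons_eq h2)
    · have hab' : a < b := by
        have e1 : key G c σ N z = l ++ a :: (s ++ [σ z] ++ [N]) := by
          rw [key, hchz]; simp
        have e2 : key G c σ N w = l ++ b :: (t ++ [N]) := by
          rw [key, hB]; simp
        rw [e1, e2] at hlex
        exact lexF3 l hlex hab
      refine Or.inr (Or.inr ?_)
      have e3 : key G c σ N p = l ++ a :: (s ++ [N]) := by
        rw [key, hA]; simp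
      have e2 : key G c σ N w = l ++ b :: (t ++ [N]) := by
        rw [key, hB]; simp
      rw [e3, e2]
      exact lexF1 _ _ _ hab'

lemma enum_exists [Fintype V] {K : V → List ℕ} (hK : Function.Injective K) :
    ∃ (vtx : Fin (Fintype.card V) → V) (pos : V → Fin (Fintype.card V)),
      (∀ v, vtx (pos v) = v) ∧ (∀ i, pos (vtx i) = i) ∧
      (∀ u v : V, List.Lex (· < ·) (K u) (K v) ↔ (pos u : ℕ) < (pos v : ℕ)) := by
  classical
  letI : LinearOrder V := LinearOrder.lift' K hK
  have hlt : ∀ u v : V, u < v ↔ List.Lex (· < ·) (K u) (K v) := fun u v => Iff.rfl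
  have hcard : (Finset.univ : Finset V).card = Fintype.card V := Finset.card_univ
  set e := Finset.univ.orderIsoOfFin hcard with he
  refine ⟨fun i => (e i : V), fun v => e.symm ⟨v, Finset.mem_univ v⟩, ?_, ?_, ?_⟩
  · intro v
    exact congrArg Subtype.val (e.apply_symm_apply _)
  · intro i
    exact e.symm_apply_apply i
  · intro u v
    rw [← hlt u v]
    have h2 : u < v ↔ e.symm ⟨u, Finset.mem_univ u⟩ < e.symm ⟨v, Finset.mem_univ v⟩ := by
      rw [e.symm.lt_iff_lt, Subtype.mk_lt_mk]
    rw [h2, Fin.lt_iff_val_lt_val]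

theorem main [Fintype V] (G : SimpleGraph V) (m : ℕ) (hm : 0 < m)
    (htree : G.IsTree) (hdiam : ∀ u v : V, G.dist u v ≤ 2 * m - 2) :
    ffn G ≤ m := by
  classical
  by_cases hne : Nonempty V
  case neg =>
    have hE : IsEmpty V := not_nonempty_iff.mp hne
    refine Nat.sInf_le ⟨0, fun _ => ∅, fun i => by simp, ?_⟩
    simp [burn, Finset.univ_eq_empty]
  case pos =>
    obtain ⟨c, hecc⟩ := exists_center htree hm hdiam
    set n := Fintype.card V with hn
    set σ : V → ℕ := fun v => ((Fintype.equivFin V) v : ℕ) with hσdef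
    have hσ : Function.Injective σ := fun u v h => by
      apply (Fintype.equivFin V).injective
      exact Fin.ext h
    have hN : ∀ z, σ z < n := fun z => (Fintype.equivFin V z).isLt
    set K : V → List ℕ := key G c σ n with hK
    obtain ⟨vtx, pos, vtx_pos, pos_vtx, lex_iff⟩ := enum_exists (key_inj hσ : Function.Injective K)
    have pos_inj : ∀ u v : V, pos u = pos v → u = v := fun u v h => by
      rw [← vtx_pos u, ← vtx_pos v, h]
    -- the strategy
    set F : ℕ → Finset V := fun t => if h : t - 1 < n then ancF G c (vtx ⟨t - 1, h⟩) else ∅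
      with hF
    have hFcard : ∀ i, (F i).card ≤ m := by
      intro i
      by_cases h : i - 1 < n
      · have hFi : F i = ancF G c (vtx ⟨i - 1, h⟩) := by rw [hF]; exact dif_pos h
        rw [hFi]
        refine le_trans card_ancF ?_
        have := hecc (vtx ⟨i - 1, h⟩)
        omega
      · have hFi : F i = ∅ := by rw [hF]; exact dif_neg h
        simp [hFi]
    have hFsucc : ∀ (t : ℕ) (htn : t < n), F (t + 1) = ancF G c (vtx ⟨t, htn⟩) := by
      intro t htn
      rw [hF]
      exact dif_pos htn
    -- invariant
    have hinv : ∀ t, t ≤ n → ∀ z ∈ burn G F t, t ≤ (pos z : ℕ) := by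
      intro t
      induction t with
      | zero => intro _ z _; omega
      | succ t ih =>
        intro htn z hz
        have htn' : t < n := by omega
        set w : V := vtx ⟨t, htn'⟩ with hw
        have hposw : (pos w : ℕ) = t := by rw [hw, pos_vtx]
        have hz' : z ∈ (burn G F t \ F (t + 1)) ∪ nbhd G (burn G F t \ F (t + 1)) := by
          rw [← burn_succ]; exact hz
        rw [hFsucc t htn', ← hw] at hz'
        replace hz := hz'
        by_contra hcon
        have hzt : (pos z : ℕ) ≤ t := by omega
        rcases Finset.mem_union.mp hz with hz1 | hz1
        · have hz2 := Finset.mem_sdiff.mp hz1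
          have := ih (by omega) z hz2.1
          have hzw : z = w := by
            apply pos_inj
            apply Fin.ext
            omega
          rw [hzw] at hz2
          exact hz2.2 (self_mem_ancF w)
        · simp only [nbhd, Finset.mem_filter, Finset.mem_univ, true_and] at hz1
          obtain ⟨hzS, x, hxS, hadj⟩ := hz1
          have hx2 := Finset.mem_sdiff.mp hxS
          have hxt : t ≤ (pos x : ℕ) := ih (by omega) x hx2.1
          have hxw : x ≠ w := by
            intro h
            rw [h] at hx2
            exact hx2.2 (self_mem_ancF w)
          have hxposlt : ¬ ((pos x : ℕ) ≤ t) := by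
            intro h
            have hxx : (pos x : ℕ) = t := by omega
            rw [← hposw] at hxx
            exact hxw (pos_inj _ _ (Fin.ext hxx))
          -- z is either below or above x
          rcases edge_fact htree (c := c) hadj with hxp | hzp
          · -- x = ppar z
            have hzc : z ≠ c := by
              intro h
              rw [h, ppar_self] at hxp
              rw [hxp, ← h] at hadj
              exact G.loopless.irrefl z hadj
            have hzw : z = w ∨ List.Lex (· < ·) (K z) (K w) := by
              by_cases h : (pos z : ℕ) = t
              · left
                apply pos_inj
                apply Fin.ext
                omega
              · right
                rw [lex_iff]
                omega
            rcases key_main htree hσ hN hzc hzw with h | h | h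
            · rw [← hxp] at h
              exact hx2.2 h
            · rw [← hxp] at h
              exact hxw h
            · rw [← hxp] at h
              have := (lex_iff x w).mp h
              omega
          · -- z = ppar x
            have hxc : x ≠ c := by
              intro h
              rw [h, ppar_self] at hzp
              rw [hzp, h] at hadj
              exact G.loopless.irrefl c hadj
            have hlex : List.Lex (· < ·) (K x) (K z) := by
              rw [hK]
              have := lex_ppar (N := n) htree hσ hN hxc
              rw [← hzp] at this
              exact this
            have := (lex_iff x z).mp hlex
            omega
    -- conclusion
    have hburn : burn G F n = ∅ := by
      rw [Finset.eq_empty_iff_forall_notMem]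
      intro z hz
      have := hinv n le_rfl z hz
      have := (pos z).isLt
      omega
    exact Nat.sInf_le ⟨n, F, hFcard, hburn⟩

end FFT

/-- Upper bound: a tree of diameter at most `2m - 2` satisfies `ffn G ≤ m`. -/
theorem ffn_le_of_tree_small_diam [Fintype V] (G : SimpleGraph V) (m : ℕ) (hm : 0 < m)
    (htree : G.IsTree) (hdiam : ∀ u v : V, G.dist u v ≤ 2 * m - 2) :
    ffn G ≤ m :=
  FFT.main G m hm htree hdiam
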